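/- Diagonalization of the mixing block of the leading symbol on symmetric two-tensors: let μ₃, q, κ be real numbers with ω := √(κ² + ((μ₃ − q)/2)²) > 0, and set ν₊ := (μ₃ + q)/2 + ω, ν₋ := (μ₃ + q)/2 − ω, Z₊ := (1/2)(1 + (μ₃ − q)/(2ω))Π₃ + (κ/(2ω))(T + T†) + (1/2)(1 − (μ₃ − q)/(2ω))(id − P), Z₋ := (1/2)(1 − (μ₃ − q)/(2ω))Π₃ − (κ/(2ω))(T + T†) + (1/2)(1 + (μ₃ − q)/(2ω))(id − P). Then Z₊ and Z₋ are complementary idempotents with Z₊Z₋ = Z₋Z₊ = 0, Z₊ + Z₋ = Π₃ + (id − P), and μ₃Π₃ + κ(T + T†) + q(id − P) = ν₊Z₊ + ν₋Z₋. -/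

import Mathlib

open Matrix

namespace NLT

/-- `|ξ|²`, the squared Euclidean norm of `ξ ∈ ℝ^m`. -/
noncomputable def nsq {m : ℕ} (ξ : Fin m → ℝ) : ℝ := ∑ i, ξ i ^ 2

/-- `(X₁φ)_{αβ} = δ_{αβ} tr φ`. -/
noncomputable def X1 {m : ℕ} (φ : Matrix (Fin m) (Fin m) ℝ) : Matrix (Fin m) (Fin m) ℝ :=
  Matrix.of fun α β => (if α = β then (1 : ℝ) else 0) * φ.trace

/-- `(X₂φ)_{αβ} = (1/(2|ξ|²)) (ξ_α (φξ)_β + ξ_β (φξ)_α)`. -/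
noncomputable def X2 {m : ℕ} (ξ : Fin m → ℝ) (φ : Matrix (Fin m) (Fin m) ℝ) :
    Matrix (Fin m) (Fin m) ℝ :=
  Matrix.of fun α β => (1 / (2 * nsq ξ)) * (ξ α * φ.mulVec ξ β + ξ β * φ.mulVec ξ α)

/-- `(X₃φ)_{αβ} = (1/|ξ|²) ξ_α ξ_β tr φ`. -/
noncomputable def X3 {m : ℕ} (ξ : Fin m → ℝ) (φ : Matrix (Fin m) (Fin m) ℝ) :
    Matrix (Fin m) (Fin m) ℝ :=
  Matrix.of fun α β => (1 / nsq ξ) * (ξ α * ξ β * φ.trace)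

/-- `(X₄φ)_{αβ} = (1/|ξ|²) δ_{αβ} ⟨ξ, φξ⟩`. -/
noncomputable def X4 {m : ℕ} (ξ : Fin m → ℝ) (φ : Matrix (Fin m) (Fin m) ℝ) :
    Matrix (Fin m) (Fin m) ℝ :=
  Matrix.of fun α β => (1 / nsq ξ) * (if α = β then (1 : ℝ) else 0) * (ξ ⬝ᵥ φ.mulVec ξ)

/-- `(X₅φ)_{αβ} = (1/|ξ|⁴) ξ_α ξ_β ⟨ξ, φξ⟩`. -/
noncomputable def X5 {m : ℕ} (ξ : Fin m → ℝ) (φ : Matrix (Fin m) (Fin m) ℝ) :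
    Matrix (Fin m) (Fin m) ℝ :=
  Matrix.of fun α β => (1 / (nsq ξ) ^ 2) * (ξ α * ξ β * (ξ ⬝ᵥ φ.mulVec ξ))

/-- `P = id − (1/m) X₁`, the projection onto trace-free part. -/
noncomputable def P {m : ℕ} (φ : Matrix (Fin m) (Fin m) ℝ) : Matrix (Fin m) (Fin m) ℝ :=
  φ - ((1 : ℝ) / m) • X1 φ

/-- `T = (1/√(m−1)) (X₃ − (1/m) X₁)`. -/
noncomputable def T {m : ℕ} (ξ : Fin m → ℝ) (φ : Matrix (Fin m) (Fin m) ℝ) :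
    Matrix (Fin m) (Fin m) ℝ :=
  (1 / Real.sqrt ((m : ℝ) - 1)) • (X3 ξ φ - ((1 : ℝ) / m) • X1 φ)

/-- `T† = (1/√(m−1)) (X₄ − (1/m) X₁)`. -/
noncomputable def Td {m : ℕ} (ξ : Fin m → ℝ) (φ : Matrix (Fin m) (Fin m) ℝ) :
    Matrix (Fin m) (Fin m) ℝ :=
  (1 / Real.sqrt ((m : ℝ) - 1)) • (X4 ξ φ - ((1 : ℝ) / m) • X1 φ)

/-- `Π₃ = (m/(m−1)) P X₅ P`. -/
noncomputable def Pi3A {m : ℕ} (ξ : Fin m → ℝ) (φ : Matrix (Fin m) (Fin m) ℝ) :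
    Matrix (Fin m) (Fin m) ℝ :=
  ((m : ℝ) / ((m : ℝ) - 1)) • P (X5 ξ (P φ))

/-- `Z₊ = (1/2)(1 + (μ₃−q)/(2ω)) Π₃ + (κ/(2ω))(T + T†) + (1/2)(1 − (μ₃−q)/(2ω))(id − P)`. -/
noncomputable def ZpS {m : ℕ} (ξ : Fin m → ℝ) (μ₃ q κ ω : ℝ)
    (φ : Matrix (Fin m) (Fin m) ℝ) : Matrix (Fin m) (Fin m) ℝ :=
  ((1 + (μ₃ - q) / (2 * ω)) / 2) • Pi3A ξ φ + (κ / (2 * ω)) • (T ξ φ + Td ξ φ)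
    + ((1 - (μ₃ - q) / (2 * ω)) / 2) • (φ - P φ)

/-- `Z₋ = (1/2)(1 − (μ₃−q)/(2ω)) Π₃ − (κ/(2ω))(T + T†) + (1/2)(1 + (μ₃−q)/(2ω))(id − P)`. -/
noncomputable def ZmS {m : ℕ} (ξ : Fin m → ℝ) (μ₃ q κ ω : ℝ)
    (φ : Matrix (Fin m) (Fin m) ℝ) : Matrix (Fin m) (Fin m) ℝ :=
  ((1 - (μ₃ - q) / (2 * ω)) / 2) • Pi3A ξ φ - (κ / (2 * ω)) • (T ξ φ + Td ξ φ)
    + ((1 + (μ₃ - q) / (2 * ω)) / 2) • (φ - P φ)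

section Aux

variable {m : ℕ} (ξ : Fin m → ℝ)

/-- quadratic form `⟨ξ, φ ξ⟩`. -/
noncomputable def qf (φ : Matrix (Fin m) (Fin m) ℝ) : ℝ := ξ ⬝ᵥ φ.mulVec ξ

/-- the matrix `x • 1 + y • ξξᵀ`. -/
noncomputable def MM (x y : ℝ) : Matrix (Fin m) (Fin m) ℝ :=
  Matrix.of fun α β => x * (if α = β then 1 else 0) + y * (ξ α * ξ β)

lemma MM_congr {x y x' y' : ℝ} (hx : x = x') (hy : y = y') : MM ξ x y = MM ξ x' y' := by
  rw [hx, hy]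

lemma MM_add (x y x' y' : ℝ) : MM ξ x y + MM ξ x' y' = MM ξ (x + x') (y + y') := by
  ext α β; by_cases h : α = β <;> simp [MM, h] <;> ring

lemma MM_sub (x y x' y' : ℝ) : MM ξ x y - MM ξ x' y' = MM ξ (x - x') (y - y') := by
  ext α β; by_cases h : α = β <;> simp [MM, h] <;> ring

lemma MM_smul (r x y : ℝ) : r • MM ξ x y = MM ξ (r * x) (r * y) := by
  ext α β; by_cases h : α = β <;> simp [MM, h] <;> ring

lemma MM_zero : MM ξ 0 0 = 0 := by
  ext α β; simp [MM]

lemma traceMM (x y : ℝ) : (MM ξ x y).trace = x * m + y * nsq ξ := by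
  simp [MM, Matrix.trace, Matrix.diag, nsq, Finset.sum_add_distrib, ← Finset.mul_sum, sq,
    Finset.card_univ, mul_comm]

lemma qfMM (x y : ℝ) : qf ξ (MM ξ x y) = x * nsq ξ + y * (nsq ξ) ^ 2 := by
  unfold qf MM nsq
  simp only [Matrix.mulVec, dotProduct, Matrix.of_apply]
  have h : ∀ α, ξ α * (∑ β, (x * (if α = β then 1 else 0) + y * (ξ α * ξ β)) * ξ β)
      = x * ξ α ^ 2 + y * ξ α ^ 2 * ∑ i, ξ i ^ 2 := by
    intro α
    rw [Finset.mul_sum]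
    have h2 : ∀ β, ξ α * ((x * (if α = β then 1 else 0) + y * (ξ α * ξ β)) * ξ β)
        = (if β = α then x * ξ α ^ 2 else 0) + y * ξ α ^ 2 * ξ β ^ 2 := by
      intro β
      by_cases hb : α = β
      · subst hb; simp; ring
      · simp [hb, Ne.symm hb]; ring
    rw [Finset.sum_congr rfl fun β _ => h2 β, Finset.sum_add_distrib,
      Finset.sum_ite_eq' Finset.univ α fun _ => x * ξ α ^ 2]
    have h3 : ∑ β, y * ξ α ^ 2 * ξ β ^ 2 = y * ξ α ^ 2 * ∑ i, ξ i ^ 2 := by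
      rw [Finset.mul_sum]
    simp [h3]
  rw [Finset.sum_congr rfl fun α _ => h α, Finset.sum_add_distrib]
  have h4 : ∑ α, x * ξ α ^ 2 = x * ∑ i, ξ i ^ 2 := by rw [Finset.mul_sum]
  have h5 : ∑ α, y * ξ α ^ 2 * (∑ i, ξ i ^ 2) = y * (∑ i, ξ i ^ 2) ^ 2 := by
    rw [← Finset.sum_mul, ← Finset.mul_sum]; ring
  rw [h4, h5]

lemma qf_sub (A B : Matrix (Fin m) (Fin m) ℝ) : qf ξ (A - B) = qf ξ A - qf ξ B := by
  simp [qf, Matrix.sub_mulVec, dotProduct_sub]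

lemma qf_add (A B : Matrix (Fin m) (Fin m) ℝ) : qf ξ (A + B) = qf ξ A + qf ξ B := by
  simp [qf, Matrix.add_mulVec, dotProduct_add]

lemma qf_smul (r : ℝ) (A : Matrix (Fin m) (Fin m) ℝ) : qf ξ (r • A) = r * qf ξ A := by
  simp [qf, Matrix.smul_mulVec, dotProduct_smul, smul_eq_mul]

end Aux

section Aux2

variable {m : ℕ} (ξ : Fin m → ℝ)

/-- `1/√(m−1)`. -/
noncomputable def cc (m : ℕ) : ℝ := 1 / Real.sqrt ((m : ℝ) - 1)

lemma X1_eq (φ : Matrix (Fin m) (Fin m) ℝ) : X1 φ = MM ξ φ.trace 0 := by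
  ext α β; by_cases h : α = β <;> simp [X1, MM, h]

lemma X3_eq (φ : Matrix (Fin m) (Fin m) ℝ) : X3 ξ φ = MM ξ 0 (φ.trace / nsq ξ) := by
  ext α β; by_cases h : α = β <;> simp [X3, MM, h] <;> ring

lemma X4_eq (φ : Matrix (Fin m) (Fin m) ℝ) : X4 ξ φ = MM ξ (qf ξ φ / nsq ξ) 0 := by
  ext α β; by_cases h : α = β <;> simp [X4, MM, qf, h] <;> ring

lemma X5_eq (φ : Matrix (Fin m) (Fin m) ℝ) : X5 ξ φ = MM ξ 0 (qf ξ φ / (nsq ξ) ^ 2) := by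
  ext α β; by_cases h : α = β <;> simp [X5, MM, qf, h] <;> ring

lemma P_eq (φ : Matrix (Fin m) (Fin m) ℝ) : P φ = φ - MM ξ (φ.trace / m) 0 := by
  rw [P, X1_eq ξ, MM_smul]
  exact congrArg _ (MM_congr ξ (by ring) (by ring))

lemma B_eq (φ : Matrix (Fin m) (Fin m) ℝ) : φ - P φ = MM ξ (φ.trace / m) 0 := by
  rw [P_eq ξ, sub_sub_cancel]

lemma T_eq (φ : Matrix (Fin m) (Fin m) ℝ) :
    T ξ φ = MM ξ (-(cc m * φ.trace / m)) (cc m * φ.trace / nsq ξ) := by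
  rw [T, X3_eq ξ, X1_eq ξ, MM_smul, MM_sub, MM_smul]
  exact MM_congr ξ (by first | (simp only [cc]; ring) | ring) (by first | (simp only [cc]; ring) | ring)

lemma Td_eq (φ : Matrix (Fin m) (Fin m) ℝ) :
    Td ξ φ = MM ξ (cc m * (qf ξ φ / nsq ξ - φ.trace / m)) 0 := by
  rw [Td, X4_eq ξ, X1_eq ξ, MM_smul, MM_sub, MM_smul]
  exact MM_congr ξ (by first | (simp only [cc]; ring) | ring) (by first | (simp only [cc]; ring) | ring)

lemma qf_P (φ : Matrix (Fin m) (Fin m) ℝ) :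
    qf ξ (P φ) = qf ξ φ - φ.trace / m * nsq ξ := by
  rw [P_eq ξ, qf_sub, qfMM]; ring

lemma P_MM (x y : ℝ) : P (MM ξ x y) = MM ξ (x - (x * m + y * nsq ξ) / m) y := by
  rw [P_eq ξ, traceMM, MM_sub]
  exact MM_congr ξ (by ring) (by ring)

/-- coefficient `e` in `Π₃ φ = MM (−n e/(m−1)) (m e/(m−1))`. -/
noncomputable def ee (φ : Matrix (Fin m) (Fin m) ℝ) : ℝ :=
  (qf ξ φ - φ.trace * nsq ξ / m) / (nsq ξ) ^ 2

lemma Pi3A_eq (hn : nsq ξ ≠ 0) (hm0 : (m : ℝ) ≠ 0) (hm1 : (m : ℝ) - 1 ≠ 0) (φ : Matrix (Fin m) (Fin m) ℝ) :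
    Pi3A ξ φ = MM ξ (-(nsq ξ * ee ξ φ / ((m : ℝ) - 1))) ((m : ℝ) * ee ξ φ / ((m : ℝ) - 1)) := by
  rw [Pi3A, X5_eq ξ, qf_P ξ, P_MM ξ, MM_smul]
  refine MM_congr ξ ?_ ?_
  · rw [ee]; field_simp; ring
  · rw [ee]; ring

end Aux2


section Aux3

variable {m : ℕ} (ξ : Fin m → ℝ)

lemma C1 (hn : nsq ξ ≠ 0) (hm0 : (m : ℝ) ≠ 0) (hm1 : (m : ℝ) - 1 ≠ 0)
    (φ : Matrix (Fin m) (Fin m) ℝ) : Pi3A ξ (Pi3A ξ φ) = Pi3A ξ φ := by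
  rw [Pi3A_eq ξ hn hm0 hm1 φ, Pi3A_eq ξ hn hm0 hm1]
  refine MM_congr ξ ?_ ?_ <;> simp only [ee, traceMM, qfMM] <;> field_simp <;> ring

lemma C2 (hn : nsq ξ ≠ 0) (hm0 : (m : ℝ) ≠ 0) (hm1 : (m : ℝ) - 1 ≠ 0)
    (φ : Matrix (Fin m) (Fin m) ℝ) : Pi3A ξ (φ - P φ) = 0 := by
  rw [B_eq ξ, Pi3A_eq ξ hn hm0 hm1]
  refine Eq.trans (MM_congr ξ ?_ ?_) (MM_zero ξ) <;>
    simp only [ee, traceMM, qfMM] <;> field_simp <;> ring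

lemma C3 (hn : nsq ξ ≠ 0) (hm0 : (m : ℝ) ≠ 0) (hm1 : (m : ℝ) - 1 ≠ 0)
    (φ : Matrix (Fin m) (Fin m) ℝ) : Pi3A ξ (T ξ φ + Td ξ φ) = T ξ φ := by
  simp only [T_eq ξ, Td_eq ξ, MM_add]
  rw [Pi3A_eq ξ hn hm0 hm1]
  refine MM_congr ξ ?_ ?_ <;> simp only [ee, traceMM, qfMM] <;> field_simp <;> ring

lemma C4 (hn : nsq ξ ≠ 0) (hm0 : (m : ℝ) ≠ 0) (hm1 : (m : ℝ) - 1 ≠ 0)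
    (φ : Matrix (Fin m) (Fin m) ℝ) :
    (T ξ φ + Td ξ φ) - P (T ξ φ + Td ξ φ) = Td ξ φ := by
  simp only [T_eq ξ, Td_eq ξ, MM_add, B_eq ξ, traceMM]
  refine MM_congr ξ ?_ ?_ <;> field_simp <;> ring

lemma C5 (hn : nsq ξ ≠ 0) (hm0 : (m : ℝ) ≠ 0) (hm1 : (m : ℝ) - 1 ≠ 0)
    (φ : Matrix (Fin m) (Fin m) ℝ) :
    T ξ (φ - P φ) + Td ξ (φ - P φ) = T ξ φ := by
  rw [B_eq ξ φ]
  simp only [T_eq ξ, Td_eq ξ, MM_add, traceMM, qfMM]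
  refine MM_congr ξ ?_ ?_ <;> field_simp <;> ring

lemma C6 (hn : nsq ξ ≠ 0) (hm0 : (m : ℝ) ≠ 0) (hm1 : (m : ℝ) - 1 ≠ 0)
    (φ : Matrix (Fin m) (Fin m) ℝ) :
    T ξ (Pi3A ξ φ) + Td ξ (Pi3A ξ φ) = Td ξ φ := by
  rw [Pi3A_eq ξ hn hm0 hm1 φ]
  simp only [T_eq ξ, Td_eq ξ, MM_add, traceMM, qfMM, ee]
  refine MM_congr ξ ?_ ?_ <;> field_simp <;> ring

lemma C7 (hn : nsq ξ ≠ 0) (hm0 : (m : ℝ) ≠ 0) (hm1 : (m : ℝ) - 1 ≠ 0)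
    (φ : Matrix (Fin m) (Fin m) ℝ) :
    Pi3A ξ φ - P (Pi3A ξ φ) = 0 := by
  rw [Pi3A_eq ξ hn hm0 hm1 φ, B_eq ξ, traceMM]
  refine Eq.trans (MM_congr ξ ?_ ?_) (MM_zero ξ) <;> simp only [ee] <;> field_simp <;> ring

lemma C8 (hn : nsq ξ ≠ 0) (hm0 : (m : ℝ) ≠ 0) (hm1 : (m : ℝ) - 1 ≠ 0)
    (φ : Matrix (Fin m) (Fin m) ℝ) :
    (φ - P φ) - P (φ - P φ) = φ - P φ := by
  rw [B_eq ξ φ]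
  simp only [B_eq ξ, traceMM]
  refine MM_congr ξ ?_ ?_ <;> field_simp <;> ring

lemma C9 (hn : nsq ξ ≠ 0) (hm0 : (m : ℝ) ≠ 0) (hm1 : (m : ℝ) - 1 ≠ 0)
    (hcc : cc m ^ 2 * ((m : ℝ) - 1) = 1)
    (φ : Matrix (Fin m) (Fin m) ℝ) :
    T ξ (T ξ φ + Td ξ φ) + Td ξ (T ξ φ + Td ξ φ) = Pi3A ξ φ + (φ - P φ) := by
  rw [Pi3A_eq ξ hn hm0 hm1 φ, B_eq ξ φ]
  simp only [T_eq ξ, Td_eq ξ, MM_add, traceMM, qfMM, ee]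
  refine MM_congr ξ ?_ ?_
  · field_simp
    linear_combination
      (φ.trace * nsq ξ * (m : ℝ) - (m : ℝ) * qf ξ φ) * hcc
  · field_simp
    linear_combination
      ((m : ℝ) * qf ξ φ - φ.trace * nsq ξ) * hcc

lemma linA (hn : nsq ξ ≠ 0) (hm0 : (m : ℝ) ≠ 0) (hm1 : (m : ℝ) - 1 ≠ 0)
    (x y z : Matrix (Fin m) (Fin m) ℝ) (a b g : ℝ) :
    Pi3A ξ (a • x + b • y + g • z) = a • Pi3A ξ x + b • Pi3A ξ y + g • Pi3A ξ z := by
  rw [Pi3A_eq ξ hn hm0 hm1 x, Pi3A_eq ξ hn hm0 hm1 y, Pi3A_eq ξ hn hm0 hm1 z,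
    Pi3A_eq ξ hn hm0 hm1]
  simp only [MM_smul, MM_add]
  refine MM_congr ξ ?_ ?_ <;>
    simp only [ee, qf_add, qf_smul, Matrix.trace_add, Matrix.trace_smul, smul_eq_mul] <;> ring

lemma linS (x y z : Matrix (Fin m) (Fin m) ℝ) (a b g : ℝ) :
    T ξ (a • x + b • y + g • z) + Td ξ (a • x + b • y + g • z)
      = a • (T ξ x + Td ξ x) + b • (T ξ y + Td ξ y) + g • (T ξ z + Td ξ z) := by
  simp only [T_eq ξ, Td_eq ξ, MM_add, MM_smul]
  refine MM_congr ξ ?_ ?_ <;>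
    simp only [qf_add, qf_smul, Matrix.trace_add, Matrix.trace_smul, smul_eq_mul] <;> ring

lemma linB (hn : nsq ξ ≠ 0) (x y z : Matrix (Fin m) (Fin m) ℝ) (a b g : ℝ) :
    (a • x + b • y + g • z) - P (a • x + b • y + g • z)
      = a • (x - P x) + b • (y - P y) + g • (z - P z) := by
  simp only [B_eq ξ, MM_smul, MM_add]
  refine MM_congr ξ ?_ ?_
  · simp only [Matrix.trace_add, Matrix.trace_smul, smul_eq_mul]; ring
  · ring

end Aux3


section Master

variable {m : ℕ} (ξ : Fin m → ℝ)

lemma master (hn : nsq ξ ≠ 0) (hm0 : (m : ℝ) ≠ 0) (hm1 : (m : ℝ) - 1 ≠ 0)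
    (hcc : cc m ^ 2 * ((m : ℝ) - 1) = 1) (a₁ b₁ g₁ a₂ b₂ g₂ : ℝ)
    (φ : Matrix (Fin m) (Fin m) ℝ) :
    a₁ • Pi3A ξ (a₂ • Pi3A ξ φ + b₂ • (T ξ φ + Td ξ φ) + g₂ • (φ - P φ))
      + b₁ • (T ξ (a₂ • Pi3A ξ φ + b₂ • (T ξ φ + Td ξ φ) + g₂ • (φ - P φ))
              + Td ξ (a₂ • Pi3A ξ φ + b₂ • (T ξ φ + Td ξ φ) + g₂ • (φ - P φ)))
      + g₁ • ((a₂ • Pi3A ξ φ + b₂ • (T ξ φ + Td ξ φ) + g₂ • (φ - P φ))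
              - P (a₂ • Pi3A ξ φ + b₂ • (T ξ φ + Td ξ φ) + g₂ • (φ - P φ)))
    = (a₁ * a₂ + b₁ * b₂) • Pi3A ξ φ + (a₁ * b₂ + b₁ * g₂) • T ξ φ
      + (b₁ * a₂ + g₁ * b₂) • Td ξ φ + (g₁ * g₂ + b₁ * b₂) • (φ - P φ) := by
  rw [linA ξ hn hm0 hm1, linS ξ, linB ξ hn,
    C1 ξ hn hm0 hm1, C2 ξ hn hm0 hm1, C3 ξ hn hm0 hm1, C4 ξ hn hm0 hm1, C5 ξ hn hm0 hm1,
    C6 ξ hn hm0 hm1, C7 ξ hn hm0 hm1, C8 ξ hn hm0 hm1, C9 ξ hn hm0 hm1 hcc]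
  module

lemma ZmS_form (μ₃ q κ ω : ℝ) (φ : Matrix (Fin m) (Fin m) ℝ) :
    ZmS ξ μ₃ q κ ω φ =
      ((1 - (μ₃ - q) / (2 * ω)) / 2) • Pi3A ξ φ + (-(κ / (2 * ω))) • (T ξ φ + Td ξ φ)
        + ((1 + (μ₃ - q) / (2 * ω)) / 2) • (φ - P φ) := by
  rw [ZmS]; module

end Master


set_option maxHeartbeats 2000000 in
/-- Diagonalization of the mixing block of the leading symbol on symmetric two-tensors:
with `ω = √(κ² + ((μ₃−q)/2)²) > 0` and `ν± = (μ₃+q)/2 ± ω`, the operators `Z₊`, `Z₋` are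
complementary idempotents and `μ₃Π₃ + κ(T+T†) + q(id−P) = ν₊Z₊ + ν₋Z₋`. -/
theorem Z_diagonalization (m : ℕ) (hm : 2 ≤ m) (ξ : Fin m → ℝ) (hξ : ξ ≠ 0)
    (μ₃ q κ : ℝ)
    (hω : 0 < Real.sqrt (κ ^ 2 + ((μ₃ - q) / 2) ^ 2))
    (φ : Matrix (Fin m) (Fin m) ℝ) (hφ : φ.IsSymm) :
    let ω : ℝ := Real.sqrt (κ ^ 2 + ((μ₃ - q) / 2) ^ 2)
    let νp : ℝ := (μ₃ + q) / 2 + ω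
    let νm : ℝ := (μ₃ + q) / 2 - ω
    ZpS ξ μ₃ q κ ω (ZpS ξ μ₃ q κ ω φ) = ZpS ξ μ₃ q κ ω φ ∧
    ZmS ξ μ₃ q κ ω (ZmS ξ μ₃ q κ ω φ) = ZmS ξ μ₃ q κ ω φ ∧
    ZpS ξ μ₃ q κ ω (ZmS ξ μ₃ q κ ω φ) = 0 ∧
    ZmS ξ μ₃ q κ ω (ZpS ξ μ₃ q κ ω φ) = 0 ∧
    ZpS ξ μ₃ q κ ω φ + ZmS ξ μ₃ q κ ω φ = Pi3A ξ φ + (φ - P φ) ∧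
    μ₃ • Pi3A ξ φ + κ • (T ξ φ + Td ξ φ) + q • (φ - P φ)
      = νp • ZpS ξ μ₃ q κ ω φ + νm • ZmS ξ μ₃ q κ ω φ := by
  intro ω νp νm
  have hm0 : (m : ℝ) ≠ 0 := by
    have : (2 : ℝ) ≤ (m : ℝ) := by exact_mod_cast hm
    linarith
  have hm1 : (m : ℝ) - 1 ≠ 0 := by
    have : (2 : ℝ) ≤ (m : ℝ) := by exact_mod_cast hm
    linarith
  have hn : nsq ξ ≠ 0 := by
    obtain ⟨i, hi⟩ := Function.ne_iff.mp hξ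
    have : 0 < nsq ξ :=
      Finset.sum_pos' (fun j _ => sq_nonneg _) ⟨i, Finset.mem_univ i, by simpa using (sq_nonneg (ξ i)).lt_of_ne (Ne.symm (pow_ne_zero 2 hi))⟩
    exact ne_of_gt this
  have hsq : Real.sqrt ((m : ℝ) - 1) ^ 2 = (m : ℝ) - 1 := by
    refine Real.sq_sqrt ?_
    have : (2 : ℝ) ≤ (m : ℝ) := by exact_mod_cast hm
    linarith
  have hcc : cc m ^ 2 * ((m : ℝ) - 1) = 1 := by
    rw [cc, div_pow, one_pow, hsq]; field_simp
  have hω0 : ω ≠ 0 := ne_of_gt hω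
  have hω2 : ω ^ 2 = κ ^ 2 + ((μ₃ - q) / 2) ^ 2 :=
    Real.sq_sqrt (add_nonneg (sq_nonneg _) (sq_nonneg _))
  refine ⟨?_, ?_, ?_, ?_, ?_, ?_⟩
  · simp only [ZpS]
    rw [master ξ hn hm0 hm1 hcc]
    match_scalars
    · field_simp
      linear_combination (-4) * hω2
    · field_simp
      ring
    · field_simp
      ring
    · field_simp
      linear_combination (-4) * hω2
    · field_simp
      linear_combination 4 * hω2
  · rw [ZmS_form ξ μ₃ q κ ω φ, ZmS_form ξ μ₃ q κ ω, master ξ hn hm0 hm1 hcc]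
    match_scalars
    · field_simp
      linear_combination (-4) * hω2
    · field_simp
      ring
    · field_simp
      ring
    · field_simp
      linear_combination (-4) * hω2
    · field_simp
      linear_combination 4 * hω2
  · rw [ZmS_form ξ μ₃ q κ ω φ]
    simp only [ZpS]
    rw [master ξ hn hm0 hm1 hcc]
    match_scalars
    · field_simp
      linear_combination 4 * hω2
    · field_simp
      ring
    · field_simp
      ring
    · field_simp
      linear_combination 4 * hω2
    · field_simp
      linear_combination (-4) * hω2
  · simp only [ZpS]
    rw [ZmS_form ξ μ₃ q κ ω, master ξ hn hm0 hm1 hcc]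
    match_scalars
    · field_simp
      linear_combination 4 * hω2
    · field_simp
      ring
    · field_simp
      ring
    · field_simp
      linear_combination 4 * hω2
    · field_simp
      linear_combination (-4) * hω2
  · rw [ZmS_form ξ μ₃ q κ ω φ]
    simp only [ZpS]
    match_scalars <;> field_simp <;> ring
  · rw [ZmS_form ξ μ₃ q κ ω φ]
    simp only [ZpS]
    match_scalars <;> field_simp <;>
      first
        | ring
        | linear_combination (-(64 * ω ^ 3)) * hω2
        | linear_combination (64 * ω ^ 3) * hω2
        | linear_combination (16 * ω ^ 2) * hω2
        | linear_combination (-(16 * ω ^ 2)) * hω2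

end NLT
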